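/- Let γ ∈ (−1, 1), γ ≠ 0. For ζ ∈ ℂ with Im ζ ≠ 0, the principal-value integral Φ(ζ) = lim_{R→∞} ∫_{−R}^{R} |s|^γ / (s − ζ) ds exists, and equals ∫₀^∞ 2ζ s^γ / ((s − ζ)(s + ζ)) ds, an absolutely convergent integral; moreover Φ is holomorphic on ℂ \ ℝ and odd: Φ(−ζ) = −Φ(ζ). -/

import Mathlib

open MeasureTheory Complex Filter

/-- The absolutely convergent form
`Φ(ζ) = ∫₀^∞ 2ζ s^γ/((s-ζ)(s+ζ)) ds` of the principal-value integral. -/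
noncomputable def Phi2 (γ : ℝ) (ζ : ℂ) : ℂ :=
  ∫ s in Set.Ioi (0:ℝ), 2 * ζ * ((s ^ γ : ℝ) : ℂ) / (((s : ℂ) - ζ) * ((s : ℂ) + ζ))

namespace Stmt8Aux

open Set

lemma sub_ne {ζ : ℂ} (h : ζ.im ≠ 0) (s : ℝ) : (s : ℂ) - ζ ≠ 0 := by
  intro hh; apply h; have := congrArg Complex.im hh; simpa using this

lemma add_ne {ζ : ℂ} (h : ζ.im ≠ 0) (s : ℝ) : (s : ℂ) + ζ ≠ 0 := by
  intro hh; apply h; have := congrArg Complex.im hh; simpa using this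

lemma im_le_norm_sub (ζ : ℂ) (s : ℝ) : |ζ.im| ≤ ‖(s : ℂ) - ζ‖ := by
  have : |((s : ℂ) - ζ).im| ≤ ‖(s : ℂ) - ζ‖ := by
    exact Complex.abs_im_le_norm _
  simpa using this

lemma im_le_norm_add (ζ : ℂ) (s : ℝ) : |ζ.im| ≤ ‖(s : ℂ) + ζ‖ := by
  have : |((s : ℂ) + ζ).im| ≤ ‖(s : ℂ) + ζ‖ := by
    exact Complex.abs_im_le_norm _
  simpa using this

lemma sub_norm_le_sub (ζ : ℂ) {s : ℝ} (hs : 0 ≤ s) : s - ‖ζ‖ ≤ ‖(s : ℂ) - ζ‖ := by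
  have h1 : ‖(s : ℂ)‖ - ‖ζ‖ ≤ ‖(s : ℂ) - ζ‖ := norm_sub_norm_le _ _
  have h2 : ‖(s : ℂ)‖ = |s| := by simp
  rw [h2, _root_.abs_of_nonneg hs] at h1; exact h1

lemma sub_norm_le_add (ζ : ℂ) {s : ℝ} (hs : 0 ≤ s) : s - ‖ζ‖ ≤ ‖(s : ℂ) + ζ‖ := by
  have h1 : ‖(s : ℂ)‖ - ‖-ζ‖ ≤ ‖(s : ℂ) - -ζ‖ := norm_sub_norm_le _ _
  simp only [norm_neg, sub_neg_eq_add] at h1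
  have h2 : ‖(s : ℂ)‖ = |s| := by simp
  rw [h2, _root_.abs_of_nonneg hs] at h1; exact h1

lemma integrableOn_of_bounds {E : Type*} [NormedAddCommGroup E] {f : ℝ → E}
    (hm : AEStronglyMeasurable f (volume.restrict (Ioi 0)))
    {γ : ℝ} (hγ : -1 < γ) (hγ' : γ < 1) {a C₁ C₂ : ℝ} (ha : 0 < a)
    (h₁ : ∀ s ∈ Ioc (0:ℝ) a, ‖f s‖ ≤ C₁ * s ^ γ)
    (h₂ : ∀ s ∈ Ioi a, ‖f s‖ ≤ C₂ * s ^ (γ - 2)) :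
    IntegrableOn f (Ioi 0) := by
  have hsplit : Ioi (0:ℝ) = Ioc 0 a ∪ Ioi a := (Ioc_union_Ioi_eq_Ioi ha.le).symm
  rw [hsplit]
  apply IntegrableOn.union
  · have hb : IntegrableOn (fun s : ℝ => C₁ * s ^ γ) (Ioc 0 a) := by
      have := (intervalIntegral.intervalIntegrable_rpow' (r := γ) (a := 0) (b := a) hγ).const_mul C₁
      rwa [intervalIntegrable_iff_integrableOn_Ioc_of_le ha.le] at this
    refine Integrable.mono hb (hm.mono_measure (Measure.restrict_mono (by
      rw [hsplit]; exact subset_union_left) le_rfl)) ?_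
    filter_upwards [ae_restrict_mem measurableSet_Ioc] with s hs
    exact (h₁ s hs).trans (le_abs_self _)
  · have hb : IntegrableOn (fun s : ℝ => C₂ * s ^ (γ - 2)) (Ioi a) :=
      (integrableOn_Ioi_rpow_of_lt (by linarith) ha).const_mul C₂
    refine Integrable.mono hb (hm.mono_measure (Measure.restrict_mono (by
      rw [hsplit]; exact subset_union_right) le_rfl)) ?_
    filter_upwards [ae_restrict_mem measurableSet_Ioi] with s hs
    exact (h₂ s hs).trans (le_abs_self _)

lemma hasDerivAt_F {γ : ℝ} (s : ℝ) {ζ : ℂ} (h : ζ.im ≠ 0) :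
    HasDerivAt (fun z : ℂ => 2 * z * ((s ^ γ : ℝ) : ℂ) / (((s : ℂ) - z) * ((s : ℂ) + z)))
      (2 * ((s ^ γ : ℝ) : ℂ) * ((s : ℂ) ^ 2 + ζ ^ 2)
        / ((((s : ℂ) - ζ) * ((s : ℂ) + ζ)) ^ 2)) ζ := by
  set c : ℂ := ((s ^ γ : ℝ) : ℂ)
  have h1 : HasDerivAt (fun z : ℂ => (s : ℂ) - z) (-1) ζ := by
    simpa using (hasDerivAt_id ζ).const_sub (s : ℂ)
  have h2 : HasDerivAt (fun z : ℂ => (s : ℂ) + z) 1 ζ := by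
    simpa using (hasDerivAt_id ζ).const_add (s : ℂ)
  have hd : HasDerivAt (fun z : ℂ => ((s : ℂ) - z) * ((s : ℂ) + z)) (-(2 * ζ)) ζ := by
    have := h1.mul h2
    refine this.congr_deriv ?_
    ring
  have hn : HasDerivAt (fun z : ℂ => 2 * z * c) (2 * c) ζ := by
    simpa using ((hasDerivAt_id ζ).const_mul (2 : ℂ)).mul_const c
  have hne : ((s : ℂ) - ζ) * ((s : ℂ) + ζ) ≠ 0 := mul_ne_zero (sub_ne h s) (add_ne h s)
  have := hn.div hd hne
  refine this.congr_deriv ?_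
  rw [div_eq_div_iff (pow_ne_zero 2 hne) (pow_ne_zero 2 hne)]
  ring

variable {γ δ M : ℝ} {ζ : ℂ}

lemma normF_eq (γ : ℝ) (ζ : ℂ) {s : ℝ} (hs : 0 < s) :
    ‖2 * ζ * ((s ^ γ : ℝ) : ℂ) / (((s : ℂ) - ζ) * ((s : ℂ) + ζ))‖
      = 2 * ‖ζ‖ * s ^ γ / (‖(s : ℂ) - ζ‖ * ‖(s : ℂ) + ζ‖) := by
  rw [norm_div, norm_mul, norm_mul, norm_mul]
  congr 2
  · simp
  · rw [Complex.norm_real]; exact _root_.abs_of_nonneg (Real.rpow_nonneg hs.le γ)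

lemma normF'_eq (γ : ℝ) (ζ : ℂ) {s : ℝ} (hs : 0 < s) :
    ‖2 * ((s ^ γ : ℝ) : ℂ) * ((s : ℂ) ^ 2 + ζ ^ 2) / ((((s : ℂ) - ζ) * ((s : ℂ) + ζ)) ^ 2)‖
      = 2 * s ^ γ * ‖(s : ℂ) ^ 2 + ζ ^ 2‖ / ((‖(s : ℂ) - ζ‖ * ‖(s : ℂ) + ζ‖) ^ 2) := by
  rw [norm_div, norm_mul, norm_mul, norm_pow, norm_mul]
  congr 3
  · simp
  · rw [Complex.norm_real]; exact _root_.abs_of_nonneg (Real.rpow_nonneg hs.le γ)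

lemma norm_sq_add_sq_le (hM : ‖ζ‖ ≤ M) (s : ℝ) :
    ‖(s : ℂ) ^ 2 + ζ ^ 2‖ ≤ s ^ 2 + M ^ 2 := by
  refine (norm_add_le _ _).trans ?_
  have h1 : ‖(s : ℂ) ^ 2‖ = s ^ 2 := by rw [norm_pow]; simp [sq_abs]
  have h2 : ‖ζ ^ 2‖ ≤ M ^ 2 := by
    rw [norm_pow]; exact pow_le_pow_left₀ (norm_nonneg _) hM 2
  rw [h1]; linarith

lemma normF_le₁ (hδ : 0 < δ) (hδ' : δ ≤ |ζ.im|) (hM : ‖ζ‖ ≤ M) {s : ℝ} (hs : 0 < s) :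
    ‖2 * ζ * ((s ^ γ : ℝ) : ℂ) / (((s : ℂ) - ζ) * ((s : ℂ) + ζ))‖
      ≤ 2 * M / δ ^ 2 * s ^ γ := by
  rw [normF_eq γ ζ hs]
  have hM0 : 0 ≤ M := le_trans (norm_nonneg _) hM
  have hsγ : (0:ℝ) ≤ s ^ γ := Real.rpow_nonneg hs.le γ
  have hd1 : δ ≤ ‖(s : ℂ) - ζ‖ := hδ'.trans (im_le_norm_sub ζ s)
  have hd2 : δ ≤ ‖(s : ℂ) + ζ‖ := hδ'.trans (im_le_norm_add ζ s)
  calc 2 * ‖ζ‖ * s ^ γ / (‖(s : ℂ) - ζ‖ * ‖(s : ℂ) + ζ‖)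
      ≤ 2 * M * s ^ γ / (δ * δ) := by
        apply div_le_div₀ (by positivity) (by nlinarith [norm_nonneg ζ]) (by positivity)
        exact mul_le_mul hd1 hd2 hδ.le (le_trans hδ.le hd1)
    _ = 2 * M / δ ^ 2 * s ^ γ := by ring

lemma half_le_sub (hM : ‖ζ‖ ≤ M) {s : ℝ} (hsa : 2 * M + 1 < s) : s / 2 ≤ ‖(s : ℂ) - ζ‖ := by
  have hM0 : 0 ≤ M := le_trans (norm_nonneg _) hM
  have := sub_norm_le_sub ζ (s := s) (by linarith)
  linarith

lemma half_le_add (hM : ‖ζ‖ ≤ M) {s : ℝ} (hsa : 2 * M + 1 < s) : s / 2 ≤ ‖(s : ℂ) + ζ‖ := by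
  have hM0 : 0 ≤ M := le_trans (norm_nonneg _) hM
  have := sub_norm_le_add ζ (s := s) (by linarith)
  linarith

lemma rpow_sub_two {s : ℝ} (hs : 0 < s) (γ : ℝ) : s ^ (γ - 2) = s ^ γ / s ^ 2 := by
  rw [Real.rpow_sub hs]
  congr 1
  rw [show (2:ℝ) = ((2:ℕ):ℝ) by norm_num, Real.rpow_natCast]

lemma normF_le₂ (hM : ‖ζ‖ ≤ M) {s : ℝ} (hsa : 2 * M + 1 < s) :
    ‖2 * ζ * ((s ^ γ : ℝ) : ℂ) / (((s : ℂ) - ζ) * ((s : ℂ) + ζ))‖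
      ≤ 8 * M * s ^ (γ - 2) := by
  have hM0 : 0 ≤ M := le_trans (norm_nonneg _) hM
  have hs : 0 < s := by linarith
  rw [normF_eq γ ζ hs]
  have hsγ : (0:ℝ) ≤ s ^ γ := Real.rpow_nonneg hs.le γ
  calc 2 * ‖ζ‖ * s ^ γ / (‖(s : ℂ) - ζ‖ * ‖(s : ℂ) + ζ‖)
      ≤ 2 * M * s ^ γ / (s / 2 * (s / 2)) := by
        apply div_le_div₀ (by positivity) (by nlinarith [norm_nonneg ζ]) (by positivity)
        exact mul_le_mul (half_le_sub hM hsa) (half_le_add hM hsa) (by linarith)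
          ((by positivity : (0:ℝ) ≤ s / 2).trans (half_le_sub hM hsa))
    _ = 8 * M * s ^ (γ - 2) := by
        rw [rpow_sub_two hs γ]
        field_simp
        ring

lemma normF'_le₁ (hδ : 0 < δ) (hδ' : δ ≤ |ζ.im|) (hM : ‖ζ‖ ≤ M) {s : ℝ} (hs : 0 < s)
    (hsa : s ≤ 2 * M + 1) :
    ‖2 * ((s ^ γ : ℝ) : ℂ) * ((s : ℂ) ^ 2 + ζ ^ 2) / ((((s : ℂ) - ζ) * ((s : ℂ) + ζ)) ^ 2)‖
      ≤ 2 * ((2 * M + 1) ^ 2 + M ^ 2) / δ ^ 4 * s ^ γ := by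
  rw [normF'_eq γ ζ hs]
  have hM0 : 0 ≤ M := le_trans (norm_nonneg _) hM
  have hsγ : (0:ℝ) ≤ s ^ γ := Real.rpow_nonneg hs.le γ
  have hd1 : δ ≤ ‖(s : ℂ) - ζ‖ := hδ'.trans (im_le_norm_sub ζ s)
  have hd2 : δ ≤ ‖(s : ℂ) + ζ‖ := hδ'.trans (im_le_norm_add ζ s)
  have hnum : ‖(s : ℂ) ^ 2 + ζ ^ 2‖ ≤ (2 * M + 1) ^ 2 + M ^ 2 := by
    refine (norm_sq_add_sq_le hM s).trans ?_
    nlinarith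
  calc 2 * s ^ γ * ‖(s : ℂ) ^ 2 + ζ ^ 2‖ / ((‖(s : ℂ) - ζ‖ * ‖(s : ℂ) + ζ‖) ^ 2)
      ≤ 2 * s ^ γ * ((2 * M + 1) ^ 2 + M ^ 2) / ((δ * δ) ^ 2) := by
        apply div_le_div₀ (by positivity)
          (by nlinarith [norm_nonneg ((s : ℂ) ^ 2 + ζ ^ 2)]) (by positivity)
        apply pow_le_pow_left₀ (by positivity)
        exact mul_le_mul hd1 hd2 hδ.le (le_trans hδ.le hd1)
    _ = 2 * ((2 * M + 1) ^ 2 + M ^ 2) / δ ^ 4 * s ^ γ := by ring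

lemma normF'_le₂ (hM : ‖ζ‖ ≤ M) {s : ℝ} (hsa : 2 * M + 1 < s) :
    ‖2 * ((s ^ γ : ℝ) : ℂ) * ((s : ℂ) ^ 2 + ζ ^ 2) / ((((s : ℂ) - ζ) * ((s : ℂ) + ζ)) ^ 2)‖
      ≤ 64 * s ^ (γ - 2) := by
  have hM0 : 0 ≤ M := le_trans (norm_nonneg _) hM
  have hs : 0 < s := by linarith
  rw [normF'_eq γ ζ hs]
  have hsγ : (0:ℝ) ≤ s ^ γ := Real.rpow_nonneg hs.le γ
  have hnum : ‖(s : ℂ) ^ 2 + ζ ^ 2‖ ≤ 2 * s ^ 2 := by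
    refine (norm_sq_add_sq_le hM s).trans ?_
    nlinarith
  calc 2 * s ^ γ * ‖(s : ℂ) ^ 2 + ζ ^ 2‖ / ((‖(s : ℂ) - ζ‖ * ‖(s : ℂ) + ζ‖) ^ 2)
      ≤ 2 * s ^ γ * (2 * s ^ 2) / ((s / 2 * (s / 2)) ^ 2) := by
        apply div_le_div₀ (by positivity)
          (by nlinarith [norm_nonneg ((s : ℂ) ^ 2 + ζ ^ 2)]) (by positivity)
        apply pow_le_pow_left₀ (by positivity)
        exact mul_le_mul (half_le_sub hM hsa) (half_le_add hM hsa) (by positivity)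
          ((by positivity : (0:ℝ) ≤ s / 2).trans (half_le_sub hM hsa))
    _ = 64 * s ^ (γ - 2) := by
        rw [rpow_sub_two hs γ]
        field_simp
        ring

/-- Integrability of the `Phi2` integrand. -/
lemma int_F (hγ : -1 < γ) (hγ' : γ < 1) (h : ζ.im ≠ 0) :
    IntegrableOn
      (fun s : ℝ => 2 * ζ * ((s ^ γ : ℝ) : ℂ) / (((s : ℂ) - ζ) * ((s : ℂ) + ζ)))
      (Ioi 0) := by
  have hδ : 0 < |ζ.im| := abs_pos.2 h
  refine integrableOn_of_bounds (Measurable.aestronglyMeasurable (by fun_prop)) hγ hγ'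
    (a := 2 * ‖ζ‖ + 1) (by positivity)
    (C₁ := 2 * ‖ζ‖ / |ζ.im| ^ 2) (C₂ := 8 * ‖ζ‖) ?_ ?_
  · intro s hs
    exact normF_le₁ hδ le_rfl le_rfl hs.1
  · intro s hs
    exact normF_le₂ le_rfl hs

lemma ball_facts {ζ₀ : ℂ} (h₀ : ζ₀.im ≠ 0) {ζ : ℂ} (hζ : ζ ∈ Metric.ball ζ₀ (|ζ₀.im| / 2)) :
    |ζ₀.im| / 2 ≤ |ζ.im| ∧ ‖ζ‖ ≤ ‖ζ₀‖ + |ζ₀.im| / 2 := by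
  rw [Metric.mem_ball, dist_eq_norm] at hζ
  have him : |ζ.im - ζ₀.im| ≤ ‖ζ - ζ₀‖ := by
    have := Complex.abs_im_le_norm (ζ - ζ₀)
    simpa using this
  constructor
  · have h1 : |ζ₀.im| - |ζ.im| ≤ |ζ₀.im - ζ.im| := abs_sub_abs_le_abs_sub _ _
    rw [abs_sub_comm] at h1
    linarith
  · have h1 : ‖ζ‖ - ‖ζ₀‖ ≤ ‖ζ - ζ₀‖ := norm_sub_norm_le _ _
    linarith

/-- Differentiability of `Phi2` at every point off the real axis. -/
lemma hasDerivAt_Phi2 (hγ : -1 < γ) (hγ' : γ < 1) {ζ₀ : ℂ} (h₀ : ζ₀.im ≠ 0) :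
    HasDerivAt (Phi2 γ)
      (∫ s in Ioi (0:ℝ),
        2 * ((s ^ γ : ℝ) : ℂ) * ((s : ℂ) ^ 2 + ζ₀ ^ 2)
          / ((((s : ℂ) - ζ₀) * ((s : ℂ) + ζ₀)) ^ 2)) ζ₀ := by
  set δ : ℝ := |ζ₀.im| / 2 with hδdef
  have hδ : 0 < δ := by
    have := abs_pos.2 h₀; simp only [hδdef]; linarith
  set M : ℝ := ‖ζ₀‖ + δ with hMdef
  have hM0 : 0 ≤ M := by positivity
  set a : ℝ := 2 * M + 1 with hadef
  have ha : 0 < a := by positivity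
  set C₁ : ℝ := 2 * ((2 * M + 1) ^ 2 + M ^ 2) / δ ^ 4 with hC₁def
  have hC₁ : 0 ≤ C₁ := by positivity
  set bound : ℝ → ℝ := fun s => if s ≤ a then C₁ * s ^ γ else 64 * s ^ (γ - 2) with hbdef
  have hbmeas : Measurable bound := by
    apply Measurable.ite (measurableSet_le measurable_id measurable_const) <;> fun_prop
  have hbint : Integrable bound (volume.restrict (Ioi 0)) := by
    refine integrableOn_of_bounds hbmeas.aestronglyMeasurable hγ hγ' ha
      (C₁ := C₁) (C₂ := 64) ?_ ?_
    · intro s hs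
      have hval : bound s = C₁ * s ^ γ := if_pos hs.2
      rw [hval, Real.norm_eq_abs,
        _root_.abs_of_nonneg (mul_nonneg hC₁ (Real.rpow_nonneg hs.1.le γ))]
    · intro s hs
      have hsa : a < s := hs
      have hval : bound s = 64 * s ^ (γ - 2) := if_neg (not_le.2 hsa)
      have hspos : (0:ℝ) < s := lt_trans ha hsa
      rw [hval, Real.norm_eq_abs, _root_.abs_of_nonneg
        (mul_nonneg (by norm_num) (Real.rpow_nonneg hspos.le _))]
  have key := hasDerivAt_integral_of_dominated_loc_of_deriv_le (μ := volume.restrict (Ioi 0))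
    (F := fun (ζ : ℂ) (s : ℝ) =>
      2 * ζ * ((s ^ γ : ℝ) : ℂ) / (((s : ℂ) - ζ) * ((s : ℂ) + ζ)))
    (F' := fun (ζ : ℂ) (s : ℝ) =>
      2 * ((s ^ γ : ℝ) : ℂ) * ((s : ℂ) ^ 2 + ζ ^ 2) / ((((s : ℂ) - ζ) * ((s : ℂ) + ζ)) ^ 2))
    (x₀ := ζ₀) (bound := bound) (Metric.ball_mem_nhds ζ₀ hδ)
    (Filter.Eventually.of_forall fun ζ => Measurable.aestronglyMeasurable (by fun_prop))
    (int_F hγ hγ' h₀)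
    (Measurable.aestronglyMeasurable (by fun_prop))
    ?_ hbint ?_
  · exact key.2
  · -- bound on the derivative
    filter_upwards [ae_restrict_mem measurableSet_Ioi] with s hs ζ hζ
    obtain ⟨hb1, hb2⟩ := ball_facts h₀ hζ
    show ‖2 * ((s ^ γ : ℝ) : ℂ) * ((s : ℂ) ^ 2 + ζ ^ 2)
        / ((((s : ℂ) - ζ) * ((s : ℂ) + ζ)) ^ 2)‖
      ≤ if s ≤ a then C₁ * s ^ γ else 64 * s ^ (γ - 2)
    by_cases hsa : s ≤ a
    · rw [if_pos hsa]
      exact normF'_le₁ hδ hb1 hb2 hs hsa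
    · rw [if_neg hsa]
      exact normF'_le₂ hb2 (not_le.1 hsa)
  · -- differentiability on the ball
    filter_upwards [ae_restrict_mem measurableSet_Ioi] with s _ ζ hζ
    obtain ⟨hb1, _⟩ := ball_facts h₀ hζ
    have him : ζ.im ≠ 0 := by
      intro hh
      rw [hh] at hb1
      simp at hb1
      linarith
    exact hasDerivAt_F s him

lemma interval_int_aux (hγ : -1 < γ) (h : ζ.im ≠ 0) {g : ℝ → ℂ}
    (hm : Measurable g) {R : ℝ} (hR : 0 ≤ R)
    (hb : ∀ s ∈ Ioc (0:ℝ) R, ‖g s‖ ≤ |ζ.im|⁻¹ * s ^ γ) :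
    IntervalIntegrable g volume 0 R := by
  rw [intervalIntegrable_iff_integrableOn_Ioc_of_le hR]
  have hbint : IntegrableOn (fun s : ℝ => |ζ.im|⁻¹ * s ^ γ) (Ioc 0 R) := by
    have := (intervalIntegral.intervalIntegrable_rpow' (r := γ) (a := 0) (b := R) hγ).const_mul
      (|ζ.im|⁻¹)
    rwa [intervalIntegrable_iff_integrableOn_Ioc_of_le hR] at this
  refine Integrable.mono hbint (hm.aestronglyMeasurable) ?_
  filter_upwards [ae_restrict_mem measurableSet_Ioc] with s hs
  exact (hb s hs).trans (le_abs_self _)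

/-- The principal value integral identity, for `R ≥ 0`. -/
lemma pv_eq (hγ : -1 < γ) (hγ0 : γ ≠ 0) (h : ζ.im ≠ 0) {R : ℝ} (hR : 0 ≤ R) :
    (∫ s in (-R)..R, ((|s| ^ γ : ℝ) : ℂ) / ((s : ℂ) - ζ))
      = ∫ s in (0:ℝ)..R, 2 * ζ * ((s ^ γ : ℝ) : ℂ) / (((s : ℂ) - ζ) * ((s : ℂ) + ζ)) := by
  have hδ : 0 < |ζ.im| := abs_pos.2 h
  set g : ℝ → ℂ := fun s => ((|s| ^ γ : ℝ) : ℂ) / ((s : ℂ) - ζ) with hgdef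
  have hnorm : ∀ s : ℝ, 0 < s → ‖((|s| ^ γ : ℝ) : ℂ)‖ = s ^ γ := by
    intro s hs
    rw [Complex.norm_real, Real.norm_eq_abs,
      _root_.abs_of_nonneg (Real.rpow_nonneg (abs_nonneg s) γ), _root_.abs_of_pos hs]
  have hi1 : IntervalIntegrable g volume 0 R := by
    refine interval_int_aux hγ h (by fun_prop) hR ?_
    intro s hs
    rw [hgdef]
    simp only
    rw [norm_div, hnorm s hs.1]
    rw [div_eq_inv_mul]
    apply mul_le_mul ?_ le_rfl (Real.rpow_nonneg hs.1.le γ) (by positivity)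
    rw [inv_le_inv₀ (hδ.trans_le (im_le_norm_sub ζ s)) hδ]
    exact (im_le_norm_sub ζ s)
  have hi2' : IntervalIntegrable (fun x => g (-x)) volume 0 R := by
    refine interval_int_aux hγ h (by fun_prop) hR ?_
    intro s hs
    rw [hgdef]
    simp only
    have hcast : ((-s : ℝ) : ℂ) - ζ = -((s : ℂ) + ζ) := by push_cast; ring
    rw [hcast, norm_div, norm_neg, abs_neg, hnorm s hs.1]
    rw [div_eq_inv_mul]
    apply mul_le_mul ?_ le_rfl (Real.rpow_nonneg hs.1.le γ) (by positivity)
    rw [inv_le_inv₀ (hδ.trans_le (im_le_norm_add ζ s)) hδ]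
    exact (im_le_norm_add ζ s)
  have hi2 : IntervalIntegrable g volume (-R) 0 := by
    have h' := IntervalIntegrable.iff_comp_neg (f := g) (a := -R) (b := 0)
    rw [neg_neg, neg_zero] at h'
    exact h'.mpr hi2'.symm
  rw [← intervalIntegral.integral_add_adjacent_intervals hi2 hi1]
  have hneg : (∫ s in (-R)..(0:ℝ), g s) = ∫ x in (0:ℝ)..R, g (-x) := by
    rw [intervalIntegral.integral_comp_neg (f := g) (a := 0) (b := R), neg_zero]
  rw [hneg, ← intervalIntegral.integral_add hi2' hi1]
  apply intervalIntegral.integral_congr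
  intro x hx
  rw [uIcc_of_le hR] at hx
  rcases eq_or_lt_of_le hx.1 with h0 | h0
  · -- x = 0
    rw [hgdef]
    simp only [← h0]
    norm_num [Real.zero_rpow hγ0]
  · -- x > 0
    rw [hgdef]
    simp only
    have hcast : ((-x : ℝ) : ℂ) - ζ = -((x : ℂ) + ζ) := by push_cast; ring
    rw [hcast, abs_neg, _root_.abs_of_pos h0, div_neg]
    have h1 : (x : ℂ) - ζ ≠ 0 := sub_ne h x
    have h2 : (x : ℂ) + ζ ≠ 0 := add_ne h x
    field_simp
    ring

lemma pv_tendsto (hγ : -1 < γ) (hγ' : γ < 1) (hγ0 : γ ≠ 0) (h : ζ.im ≠ 0) :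
    Tendsto (fun R : ℝ => ∫ s in (-R)..R, ((|s| ^ γ : ℝ) : ℂ) / ((s : ℂ) - ζ))
      atTop (nhds (Phi2 γ ζ)) := by
  have key := intervalIntegral_tendsto_integral_Ioi (μ := volume) 0
    (int_F hγ hγ' h) (tendsto_id (x := atTop))
  refine key.congr' ?_
  filter_upwards [eventually_ge_atTop (0:ℝ)] with R hR
  exact (pv_eq hγ hγ0 h hR).symm

lemma phi2_odd (γ : ℝ) (ζ : ℂ) : Phi2 γ (-ζ) = -Phi2 γ ζ := by
  have hpt : ∀ s : ℝ,
      2 * (-ζ) * ((s ^ γ : ℝ) : ℂ) / (((s : ℂ) - -ζ) * ((s : ℂ) + -ζ))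
        = -(2 * ζ * ((s ^ γ : ℝ) : ℂ) / (((s : ℂ) - ζ) * ((s : ℂ) + ζ))) := by
    intro s
    ring
  simp only [Phi2, hpt]
  exact integral_neg _

end Stmt8Aux

/-- For `γ ∈ (-1,1) \ {0}` and `Im ζ ≠ 0`: the integrand of `Phi2` is
integrable on `(0,∞)`, the principal value `lim_{R→∞} ∫_{-R}^R |s|^γ/(s-ζ) ds`
exists and equals `Phi2 γ ζ`, `Phi2 γ` is odd, and it is holomorphic on
`ℂ \ ℝ`. -/
theorem stmt_8 (γ : ℝ) (hγ : γ ∈ Set.Ioo (-1 : ℝ) 1) (hγ0 : γ ≠ 0) :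
    (∀ ζ : ℂ, ζ.im ≠ 0 →
      MeasureTheory.IntegrableOn
        (fun s : ℝ => 2 * ζ * ((s ^ γ : ℝ) : ℂ) / (((s : ℂ) - ζ) * ((s : ℂ) + ζ)))
        (Set.Ioi 0) ∧
      Filter.Tendsto (fun R : ℝ => ∫ s in (-R)..R, ((|s| ^ γ : ℝ) : ℂ) / ((s : ℂ) - ζ))
        Filter.atTop (nhds (Phi2 γ ζ)) ∧
      Phi2 γ (-ζ) = -Phi2 γ ζ) ∧
    DifferentiableOn ℂ (Phi2 γ) {ζ : ℂ | ζ.im ≠ 0} := by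
  refine ⟨fun ζ hζ => ⟨Stmt8Aux.int_F hγ.1 hγ.2 hζ,
    Stmt8Aux.pv_tendsto hγ.1 hγ.2 hγ0 hζ, Stmt8Aux.phi2_odd γ ζ⟩, ?_⟩
  intro ζ₀ h₀
  exact (Stmt8Aux.hasDerivAt_Phi2 hγ.1 hγ.2 h₀).differentiableAt.differentiableWithinAt
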